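/- Let α, β, γ be partitions with α₁ ≥ β₁. If α = β then |ᾱ ∩ β̄| + α₁ + β₁ = |α| + α₁; if α ⊊ β then |ᾱ ∩ β̄| + α₁ + β₁ ≤ |β| + β₁ − 1; and if α ⊄ β then |ᾱ ∩ β̄| + α₁ + β₁ ≤ |α| + α₁ − 1. In particular, the bound M₁(α,β;γ) = |γ| + |ᾱ ∩ β̄| + α₁ + β₁ is at most Vallejo's bound M_V(α,β;γ). -/
import Mathlib


open scoped BigOperators Classical

noncomputable section

/-- `f : ℕ → ℕ` represents a partition (0-indexed parts: `f 0` is the first part)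
if it is weakly decreasing and eventually zero. -/
def IsPartit (f : ℕ → ℕ) : Prop :=
  (∀ ⦃i j : ℕ⦄, i ≤ j → f j ≤ f i) ∧ ∃ N, ∀ i, N ≤ i → f i = 0

/-- The weight `|λ|` of a partition: the sum of its parts. -/
def wt (f : ℕ → ℕ) : ℕ := ∑ᶠ i, f i

/-- Frobenius character formula: the (virtual) irreducible character of the symmetric
group `S_n` indexed by the (generalized) partition `f`, evaluated at cycle type `ρ`:
the coefficient of `x^(f + δ)` in the Vandermonde determinant times the power sum `p_ρ`,
in `n` variables. -/
def chiC (n : ℕ) (f : ℕ → ℕ) (ρ : Multiset ℕ) : ℤ :=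
  MvPolynomial.coeff
    (Finsupp.equivFunOnFinite.symm (fun i : Fin n => f i.val + (n - 1 - i.val)))
    ((∏ p ∈ Finset.univ.filter (fun p : Fin n × Fin n => p.1 < p.2),
        (MvPolynomial.X p.1 - MvPolynomial.X p.2)) *
      (ρ.map (fun k => ∑ i : Fin n, (MvPolynomial.X i : MvPolynomial (Fin n) ℤ) ^ k)).prod)

/-- The Kronecker coefficient `g_{f,g}^h` for partitions of `n`, via the character
scalar product `(1/n!) ∑_{σ ∈ S_n} χ_f(σ) χ_g(σ) χ_h(σ)`. -/
def kron (n : ℕ) (f g h : ℕ → ℕ) : ℕ :=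
  ((∑ σ : Equiv.Perm (Fin n),
      chiC n f σ.cycleType * chiC n g σ.cycleType * chiC n h σ.cycleType) /
    (n.factorial : ℤ)).toNat

/-- The Kronecker coefficient `g_{f,g}^h` (zero unless all weights agree). -/
def kron0 (f g h : ℕ → ℕ) : ℕ :=
  if wt g = wt f ∧ wt h = wt f then kron (wt f) f g h else 0

/-- `λ[n] = (n - |λ|, λ₁, λ₂, …)`. -/
def ext (f : ℕ → ℕ) (n : ℕ) : ℕ → ℕ := fun i => if i = 0 then n - wt f else f (i - 1)

/-- The reduced Kronecker coefficient `ḡ_{f,g}^h`: the stable value of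
`g_{f[n],g[n]}^{h[n]}`, realized at the (sufficiently large) index
`n = |f| + |g| + |h| + f₁ + g₁ + h₁`. -/
def rkron (f g h : ℕ → ℕ) : ℕ :=
  kron (wt f + wt g + wt h + f 0 + g 0 + h 0)
    (ext f (wt f + wt g + wt h + f 0 + g 0 + h 0))
    (ext g (wt f + wt g + wt h + f 0 + g 0 + h 0))
    (ext h (wt f + wt g + wt h + f 0 + g 0 + h 0))

/-- The Littlewood–Richardson coefficient `c_{f,g}^h`, via
`⟨Res_{S_a × S_b} χ_h , χ_f ⊗ χ_g⟩` where `a = |f|`, `b = |g|`. -/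
def lr (f g h : ℕ → ℕ) : ℕ :=
  if wt h = wt f + wt g then
    ((∑ σ : Equiv.Perm (Fin (wt f)), ∑ τ : Equiv.Perm (Fin (wt g)),
        chiC (wt f) f σ.cycleType * chiC (wt g) g τ.cycleType *
          chiC (wt f + wt g) h (σ.cycleType + τ.cycleType)) /
      (((wt f).factorial : ℤ) * ((wt g).factorial : ℤ))).toNat
  else 0

/-- The triple Littlewood–Richardson coefficient `c_{f,g,h}^k = ⟨s_f s_g s_h, s_k⟩`. -/
def lr3 (f g h k : ℕ → ℕ) : ℕ :=
  if wt k = wt f + wt g + wt h then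
    ((∑ σ : Equiv.Perm (Fin (wt f)), ∑ τ : Equiv.Perm (Fin (wt g)),
        ∑ υ : Equiv.Perm (Fin (wt h)),
        chiC (wt f) f σ.cycleType * chiC (wt g) g τ.cycleType *
          chiC (wt h) h υ.cycleType *
          chiC (wt f + wt g + wt h) k (σ.cycleType + τ.cycleType + υ.cycleType)) /
      (((wt f).factorial : ℤ) * ((wt g).factorial : ℤ) * ((wt h).factorial : ℤ))).toNat
  else 0

/-- `λ̄ = (λ₂, λ₃, …)`: remove the first part. -/
def pbar (f : ℕ → ℕ) : ℕ → ℕ := fun i => f (i + 1)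

/-- Componentwise minimum (intersection) of partitions. -/
def pmin (f g : ℕ → ℕ) : ℕ → ℕ := fun i => min (f i) (g i)

/-- `E_{k+1} f`: erase the part with (0-based) index `k`. -/
def perase (f : ℕ → ℕ) (k : ℕ) : ℕ → ℕ := fun i => if i < k then f i else f (i + 1)

/-- `f^{†(k+1)}`: add `1` to the parts of index `< k` and delete the part of index `k`. -/
def pdag (f : ℕ → ℕ) (k : ℕ) : ℕ → ℕ := fun i => if i < k then f i + 1 else f (i + 1)

/-- The length `ℓ(f)`: the number of nonzero parts (for a partition). -/
def plen (f : ℕ → ℕ) : ℕ := sInf {n | f n = 0}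


lemma wt_eq_sum (f : ℕ → ℕ) (N : ℕ) (h : ∀ i, N ≤ i → f i = 0) :
    wt f = ∑ i ∈ Finset.range N, f i := by
  unfold wt
  apply finsum_eq_finset_sum_of_support_subset
  intro x hx
  simp only [Function.mem_support] at hx
  simp only [Finset.coe_range, Set.mem_Iio]
  by_contra hc
  exact hx (h x (by omega))

/-- Assume `α₁ ≥ β₁`. If `α = β` then `|ᾱ ∩ β̄| + α₁ + β₁ = |α| + α₁`;
if `α ⊊ β` then `|ᾱ ∩ β̄| + α₁ + β₁ ≤ |β| + β₁ - 1`; if `α ⊄ β` then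
`|ᾱ ∩ β̄| + α₁ + β₁ ≤ |α| + α₁ - 1`. In particular `M₁(α,β;γ) ≤ M_V(α,β;γ)`. -/
theorem stmt16 (α β γ : ℕ → ℕ) (hα : IsPartit α) (hβ : IsPartit β) (hγ : IsPartit γ)
    (h1 : β 0 ≤ α 0) :
    (α = β → wt (pmin (pbar α) (pbar β)) + α 0 + β 0 = wt α + α 0) ∧
    ((α ≠ β ∧ ∀ i, α i ≤ β i) →
      wt (pmin (pbar α) (pbar β)) + α 0 + β 0 ≤ wt β + β 0 - 1) ∧
    ((¬ ∀ i, α i ≤ β i) →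
      wt (pmin (pbar α) (pbar β)) + α 0 + β 0 ≤ wt α + α 0 - 1) ∧
    (wt γ + wt (pmin (pbar α) (pbar β)) + α 0 + β 0 ≤
      wt γ + (if α = β then max (wt α + α 0) (wt γ)
        else max (max (wt α + α 0 - 1) (wt β + β 0 - 1)) (wt γ))) := by
  obtain ⟨hαm, Nα, hNα⟩ := hα
  obtain ⟨hβm, Nβ, hNβ⟩ := hβ
  set N := max Nα Nβ with hN
  have hA : ∀ i, N ≤ i → α i = 0 := fun i hi => hNα i (le_trans (le_max_left _ _) hi)
  have hB : ∀ i, N ≤ i → β i = 0 := fun i hi => hNβ i (le_trans (le_max_right _ _) hi)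
  have hwα : wt α = ∑ i ∈ Finset.range (N + 1), α i :=
    wt_eq_sum α (N + 1) (fun i hi => hA i (by omega))
  have hwβ : wt β = ∑ i ∈ Finset.range (N + 1), β i :=
    wt_eq_sum β (N + 1) (fun i hi => hB i (by omega))
  have e1 : wt α = (∑ i ∈ Finset.range N, α (i + 1)) + α 0 := by
    rw [hwα, Finset.sum_range_succ']
  have e2 : wt β = (∑ i ∈ Finset.range N, β (i + 1)) + β 0 := by
    rw [hwβ, Finset.sum_range_succ']
  have e3 : wt (pmin (pbar α) (pbar β)) =
      ∑ i ∈ Finset.range N, min (α (i + 1)) (β (i + 1)) :=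
    wt_eq_sum _ N (fun i hi => by
      simp only [pmin, pbar, hA (i + 1) (by omega), hB (i + 1) (by omega), min_self])
  have P1 : α = β → wt (pmin (pbar α) (pbar β)) + α 0 + β 0 = wt α + α 0 := by
    intro h; subst h
    simp only [min_self] at e3
    omega
  have P2 : (α ≠ β ∧ ∀ i, α i ≤ β i) →
      wt (pmin (pbar α) (pbar β)) + α 0 + β 0 ≤ wt β + β 0 - 1 := by
    rintro ⟨hne, hle⟩
    have hj : ∃ j, α j < β j := by
      by_contra hc
      push_neg at hc
      exact hne (funext fun i => le_antisymm (hle i) (hc i))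
    obtain ⟨j, hj⟩ := hj
    have hjN : j < N + 1 := by
      by_contra hc
      rw [hA j (by omega), hB j (by omega)] at hj
      omega
    have hlt : wt α < wt β := by
      rw [hwα, hwβ]
      exact Finset.sum_lt_sum (fun i _ => hle i) ⟨j, Finset.mem_range.mpr hjN, hj⟩
    have emin : (∑ i ∈ Finset.range N, min (α (i + 1)) (β (i + 1))) =
        ∑ i ∈ Finset.range N, α (i + 1) :=
      Finset.sum_congr rfl (fun i _ => min_eq_left (hle (i + 1)))
    omega
  have P3 : (¬ ∀ i, α i ≤ β i) →
      wt (pmin (pbar α) (pbar β)) + α 0 + β 0 ≤ wt α + α 0 - 1 := by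
    intro h
    push_neg at h
    obtain ⟨i, hi⟩ := h
    have hle : (∑ i ∈ Finset.range N, min (α (i + 1)) (β (i + 1))) ≤
        ∑ i ∈ Finset.range N, α (i + 1) :=
      Finset.sum_le_sum (fun i _ => min_le_left _ _)
    rcases Nat.eq_zero_or_pos i with h0 | hpos
    · subst h0; omega
    · obtain ⟨j, rfl⟩ : ∃ j, i = j + 1 := ⟨i - 1, by omega⟩
      have hjN : j < N := by
        by_contra hc
        rw [hA (j + 1) (by omega), hB (j + 1) (by omega)] at hi
        omega
      have hlt : (∑ i ∈ Finset.range N, min (α (i + 1)) (β (i + 1))) <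
          ∑ i ∈ Finset.range N, α (i + 1) :=
        Finset.sum_lt_sum (fun i _ => min_le_left _ _)
          ⟨j, Finset.mem_range.mpr hjN, by omega⟩
      omega
  refine ⟨P1, P2, P3, ?_⟩
  by_cases hab : α = β
  · rw [if_pos hab]
    have := P1 hab
    omega
  · rw [if_neg hab]
    by_cases hle : ∀ i, α i ≤ β i
    · have := P2 ⟨hab, hle⟩
      omega
    · have := P3 hle
      omega
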